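/- For any weight matrix P ∈ ℝ_{>0}^{m×n} and any ε > 0, there exist α ∈ ℝ and a parameter vector w ∈ ℝ_{>0}^m such that ℓ_i(P,α,w) ≤ (1+ε)·ℓ^MKS(P) for every agent i ∈ [m]. -/

import Mathlib

open Finset

/-- EP-allocation with exponent `α`: fraction of item `j` assigned to agent `i`. -/
noncomputable def epAlloc {m n : ℕ} (P : Fin m → Fin n → ℝ) (α : ℝ) (w : Fin m → ℝ)
    (i : Fin m) (j : Fin n) : ℝ :=
  P i j ^ α * w i / ∑ i', P i' j ^ α * w i'

/-- Load of agent `i` under the EP-allocation with exponent `α`. -/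
noncomputable def epLoad {m n : ℕ} (P : Fin m → Fin n → ℝ) (α : ℝ) (w : Fin m → ℝ)
    (i : Fin m) : ℝ :=
  ∑ j, epAlloc P α w i j * P i j

/-- A feasible (fractional) assignment: entries in `[0,1]`, each item fully allocated. -/
def Feasible {m n : ℕ} (X : Fin m → Fin n → ℝ) : Prop :=
  (∀ i j, 0 ≤ X i j ∧ X i j ≤ 1) ∧ ∀ j, ∑ i, X i j = 1

/-- Load of agent `i` under the assignment `X`. -/
noncomputable def loadX {m n : ℕ} (P X : Fin m → Fin n → ℝ) (i : Fin m) : ℝ :=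
  ∑ j, X i j * P i j

/-- Optimal makespan (MinMax objective). -/
noncomputable def MKS {m n : ℕ} (P : Fin m → Fin n → ℝ) : ℝ :=
  sInf { t | ∃ X, Feasible X ∧ t = ⨆ i, loadX P X i }

/-- Optimal Santa Claus value (MaxMin objective). -/
noncomputable def SNT {m n : ℕ} (P : Fin m → Fin n → ℝ) : ℝ :=
  sSup { t | ∃ X, Feasible X ∧ t = ⨅ i, loadX P X i }



open Finset

private noncomputable def infP {m n : ℕ} [Nonempty (Fin m)] (P : Fin m → Fin n → ℝ)
    (z : Fin m → ℝ) (j : Fin n) : ℝ :=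
  Finset.univ.inf' Finset.univ_nonempty fun i => z i * P i j

private noncomputable def Dfun {m n : ℕ} [Nonempty (Fin m)] (P : Fin m → Fin n → ℝ)
    (z : Fin m → ℝ) : ℝ :=
  ∑ j, infP P z j

section basic
variable {m n : ℕ} [Nonempty (Fin m)] {P : Fin m → Fin n → ℝ} {z : Fin m → ℝ}

private lemma infP_le (j : Fin n) (i : Fin m) : infP P z j ≤ z i * P i j :=
  Finset.inf'_le _ (mem_univ i)

private lemma le_infP {a : ℝ} (j : Fin n) (h : ∀ i, a ≤ z i * P i j) : a ≤ infP P z j :=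
  Finset.le_inf' _ _ fun i _ => h i

private lemma infP_pos (hP : ∀ i j, 0 < P i j) (hz : ∀ i, 0 < z i) (j : Fin n) :
    0 < infP P z j := by
  obtain ⟨i, _, hi⟩ := Finset.exists_mem_eq_inf' (Finset.univ_nonempty (α := Fin m))
    (fun i => z i * P i j)
  rw [infP, hi]; exact mul_pos (hz i) (hP i j)

private lemma infP_nonneg (hP : ∀ i j, 0 < P i j) (hz : ∀ i, 0 ≤ z i) (j : Fin n) :
    0 ≤ infP P z j :=
  le_infP j fun i => mul_nonneg (hz i) (hP i j).le

private lemma infP_smul {c : ℝ} (hc : 0 ≤ c) (j : Fin n) :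
    infP P (fun i => c * z i) j = c * infP P z j := by
  apply le_antisymm
  · obtain ⟨i, _, hi⟩ := Finset.exists_mem_eq_inf' (Finset.univ_nonempty (α := Fin m))
      (fun i => z i * P i j)
    calc infP P (fun i => c * z i) j ≤ c * z i * P i j := infP_le j i
    _ = c * (z i * P i j) := by ring
    _ = c * infP P z j := by rw [← hi]; rfl
  · apply le_infP
    intro i
    calc c * infP P z j ≤ c * (z i * P i j) := mul_le_mul_of_nonneg_left (infP_le j i) hc
    _ = c * z i * P i j := by ring

private lemma Dfun_smul {c : ℝ} (hc : 0 ≤ c) :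
    Dfun P (fun i => c * z i) = c * Dfun P z := by
  simp only [Dfun, infP_smul hc, Finset.mul_sum]

end basic

section dual
variable {m n : ℕ}

private lemma exists_dual [Nonempty (Fin m)] [Nonempty (Fin n)]
    (P : Fin m → Fin n → ℝ) (hP : ∀ i j, 0 < P i j) :
    ∃ z : Fin m → ℝ, (∀ i, 0 < z i) ∧ (∑ i, z i = 1) ∧
      ∀ z' : Fin m → ℝ, (∀ i, 0 ≤ z' i) → (∑ i, z' i = 1) → Dfun P z' ≤ Dfun P z := by
  have hm : (0:ℝ) < m := by exact_mod_cast Fin.pos_iff_nonempty.2 ‹_›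
  set S : Set (Fin m → ℝ) := {z | (∀ i, 0 ≤ z i) ∧ ∑ i, z i = 1} with hS
  have hclosed : IsClosed S := by
    have h1 : IsClosed {z : Fin m → ℝ | ∀ i, 0 ≤ z i} := by
      rw [Set.setOf_forall]
      exact isClosed_iInter fun i => isClosed_le continuous_const (continuous_apply i)
    have h2 : IsClosed {z : Fin m → ℝ | ∑ i, z i = 1} :=
      isClosed_eq (by continuity) continuous_const
    exact h1.inter h2
  have hsub : S ⊆ Metric.closedBall 0 1 := by
    intro z hz
    rw [mem_closedBall_zero_iff]
    rw [pi_norm_le_iff_of_nonneg zero_le_one]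
    intro i
    rw [Real.norm_eq_abs, abs_le]
    refine ⟨by linarith [hz.1 i], ?_⟩
    calc z i ≤ ∑ k, z k := Finset.single_le_sum (fun k _ => hz.1 k) (mem_univ i)
    _ = 1 := hz.2
  have hcompact : IsCompact S :=
    IsCompact.of_isClosed_subset (isCompact_closedBall 0 1) hclosed hsub
  have hne : S.Nonempty := by
    refine ⟨fun _ => (m:ℝ)⁻¹, fun i => by positivity, ?_⟩
    rw [Finset.sum_const, card_univ, Fintype.card_fin, nsmul_eq_mul]
    field_simp
  have hcont : ContinuousOn (Dfun P) S := by
    apply Continuous.continuousOn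
    apply continuous_finset_sum
    intro j _
    exact Continuous.finset_inf'_apply Finset.univ_nonempty
      (fun i _ => (continuous_apply i).mul continuous_const)
  obtain ⟨z, hzS, hzmax⟩ := hcompact.exists_isMaxOn hne hcont
  have hmax : ∀ z' : Fin m → ℝ, (∀ i, 0 ≤ z' i) → (∑ i, z' i = 1) → Dfun P z' ≤ Dfun P z :=
    fun z' h1 h2 => hzmax ⟨h1, h2⟩
  refine ⟨z, ?_, hzS.2, hmax⟩
  by_contra hcon
  push_neg at hcon
  obtain ⟨k, hk⟩ := hcon
  have hzk : z k = 0 := le_antisymm hk (hzS.1 k)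
  have hD0 : Dfun P z ≤ 0 := by
    apply Finset.sum_nonpos
    intro j _
    calc infP P z j ≤ z k * P k j := infP_le j k
    _ = 0 := by rw [hzk, zero_mul]
  have hu : Dfun P (fun _ => (m:ℝ)⁻¹) > 0 := by
    apply Finset.sum_pos
    · intro j _
      exact infP_pos hP (fun _ => by positivity) j
    · exact univ_nonempty
  have := hmax (fun _ => (m:ℝ)⁻¹) (fun i => by positivity)
    (by rw [Finset.sum_const, card_univ, Fintype.card_fin, nsmul_eq_mul]; field_simp)
  linarith

private lemma dual_le_MKS [Nonempty (Fin m)] (P : Fin m → Fin n → ℝ)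
    (hP : ∀ i j, 0 < P i j) (z : Fin m → ℝ) (hz : ∀ i, 0 ≤ z i) (hz1 : ∑ i, z i = 1) :
    Dfun P z ≤ MKS P := by
  have hm : (0:ℝ) < m := by exact_mod_cast Fin.pos_iff_nonempty.2 ‹_›
  apply le_csInf
  · refine ⟨⨆ i, loadX P (fun _ _ => (m:ℝ)⁻¹) i, fun _ _ => (m:ℝ)⁻¹, ⟨?_, ?_⟩, rfl⟩
    · refine fun i j => ⟨by positivity, ?_⟩
      have h1m : (1:ℝ) ≤ m := by exact_mod_cast Fin.pos_iff_nonempty.2 ‹_›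
      exact inv_le_one_of_one_le₀ h1m
    · intro j
      rw [Finset.sum_const, card_univ, Fintype.card_fin, nsmul_eq_mul]
      field_simp
  · rintro b ⟨X, ⟨hX01, hXsum⟩, rfl⟩
    have hload : ∀ i, loadX P X i ≤ ⨆ i', loadX P X i' :=
      fun i => le_ciSup (Finite.bddAbove_range _) i
    calc Dfun P z = ∑ j, infP P z j := rfl
    _ ≤ ∑ j, ∑ i, X i j * (z i * P i j) := by
        apply Finset.sum_le_sum
        intro j _
        calc infP P z j = ∑ i, X i j * infP P z j := by
              rw [← Finset.sum_mul, hXsum j, one_mul]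
        _ ≤ ∑ i, X i j * (z i * P i j) :=
            Finset.sum_le_sum fun i _ =>
              mul_le_mul_of_nonneg_left (infP_le j i) (hX01 i j).1
    _ = ∑ i, z i * loadX P X i := by
        rw [Finset.sum_comm]
        congr 1; ext i
        rw [loadX, Finset.mul_sum]
        congr 1; ext j; ring
    _ ≤ ∑ i, z i * (⨆ i', loadX P X i') :=
        Finset.sum_le_sum fun i _ => mul_le_mul_of_nonneg_left (hload i) (hz i)
    _ = ⨆ i', loadX P X i' := by rw [← Finset.sum_mul, hz1, one_mul]

end dual
section slope

private lemma deriv_nonneg_right (F : ℝ → ℝ) (F' s₀ : ℝ) (hs₀ : 0 < s₀)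
    (hd : HasDerivAt F F' 0) (h0 : F 0 = 0) (h : ∀ s ∈ Set.Ioc 0 s₀, 0 ≤ F s) : 0 ≤ F' := by
  rw [hasDerivAt_iff_tendsto_slope] at hd
  have hmono : nhdsWithin (0:ℝ) (Set.Ioi 0) ≤ nhdsWithin 0 {(0:ℝ)}ᶜ := by
    apply nhdsWithin_mono
    intro x hx
    exact ne_of_gt hx
  have hd' := hd.mono_left hmono
  apply ge_of_tendsto hd'
  filter_upwards [Ioc_mem_nhdsGT hs₀] with s hs
  rw [slope_def_field, h0, sub_zero, sub_zero]
  exact div_nonneg (h s hs) hs.1.le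

end slope

section support
variable {m n : ℕ}

private lemma support_ineq [Nonempty (Fin m)] [Nonempty (Fin n)]
    (P : Fin m → Fin n → ℝ) (hP : ∀ i j, 0 < P i j) (z : Fin m → ℝ) (hz : ∀ i, 0 < z i)
    (hz1 : ∑ i, z i = 1)
    (hmax : ∀ z' : Fin m → ℝ, (∀ i, 0 ≤ z' i) → (∑ i, z' i = 1) → Dfun P z' ≤ Dfun P z)
    (d : Fin m → ℝ) (t : Fin n → ℝ)
    (ht : ∀ j i, z i * P i j = infP P z j → t j ≤ d i) :
    ∑ j, infP P z j * t j ≤ Dfun P z * ∑ i, z i * d i := by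
  -- homogeneous form of maximality
  have hDle : ∀ z' : Fin m → ℝ, (∀ i, 0 < z' i) → Dfun P z' ≤ Dfun P z * ∑ i, z' i := by
    intro z' hz'
    have hsumpos : 0 < ∑ i, z' i := Finset.sum_pos (fun i _ => hz' i) univ_nonempty
    have h1 : Dfun P (fun i => (∑ k, z' k)⁻¹ * z' i) ≤ Dfun P z := by
      apply hmax
      · exact fun i => mul_nonneg (inv_nonneg.2 hsumpos.le) (hz' i).le
      · rw [← Finset.mul_sum]; field_simp
    rw [Dfun_smul (by positivity)] at h1
    calc Dfun P z' = (∑ i, z' i) * ((∑ k, z' k)⁻¹ * Dfun P z') := by field_simp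
    _ ≤ (∑ i, z' i) * Dfun P z := mul_le_mul_of_nonneg_left h1 hsumpos.le
    _ = Dfun P z * ∑ i, z' i := by ring
  -- per-pair small-time bound
  have hpair : ∀ p : Fin m × Fin n, ∃ s₁ : ℝ, 0 < s₁ ∧ ∀ s ∈ Set.Ioc (0:ℝ) s₁,
      infP P z p.2 * (1 + s * t p.2) ≤ z p.1 * Real.exp (s * d p.1) * P p.1 p.2 := by
    rintro ⟨i, j⟩
    by_cases htight : z i * P i j = infP P z j
    · refine ⟨1, one_pos, fun s hs => ?_⟩
      have h1 : 1 + s * t j ≤ Real.exp (s * d i) := by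
        calc 1 + s * t j ≤ 1 + s * d i := by
              have := ht j i htight
              nlinarith [hs.1]
        _ ≤ Real.exp (s * d i) := by linarith [Real.add_one_le_exp (s * d i)]
      calc infP P z j * (1 + s * t j) ≤ infP P z j * Real.exp (s * d i) :=
            mul_le_mul_of_nonneg_left h1 (infP_pos hP hz j).le
      _ = z i * P i j * Real.exp (s * d i) := by rw [htight]
      _ = z i * Real.exp (s * d i) * P i j := by ring
    · -- strict slack: use continuity
      have hstrict : infP P z j < z i * P i j := lt_of_le_of_ne (infP_le j i) (Ne.symm htight)
      set G : ℝ → ℝ := fun s => z i * Real.exp (s * d i) * P i j - infP P z j * (1 + s * t j)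
        with hG
      have hGcont : Continuous G := by
        apply Continuous.sub
        · exact (continuous_const.mul ((continuous_id.mul continuous_const).rexp)).mul
            continuous_const
        · exact continuous_const.mul (continuous_const.add (continuous_id.mul continuous_const))
      have hG0 : 0 < G 0 := by
        simp only [hG, zero_mul, Real.exp_zero, mul_one, add_zero]
        linarith
      have hev : ∀ᶠ s in nhds (0:ℝ), 0 < G s :=
        (hGcont.continuousAt (x := (0:ℝ))).eventually_const_lt hG0
      obtain ⟨δ, hδ, hδ'⟩ := Metric.eventually_nhds_iff.mp hev
      refine ⟨δ/2, by positivity, fun s hs => ?_⟩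
      have hd2 : dist s 0 < δ := by
        rw [Real.dist_eq, sub_zero, abs_of_pos hs.1]
        linarith [hs.2]
      have := hδ' hd2
      simp only [hG] at this
      linarith
  choose s₁ hs₁pos hs₁ using hpair
  have hs₀pos : 0 < Finset.univ.inf' Finset.univ_nonempty s₁ := by
    rw [Finset.lt_inf'_iff]
    exact fun p _ => hs₁pos p
  set s₀ : ℝ := Finset.univ.inf' Finset.univ_nonempty s₁ with hs₀def
  set μ := Dfun P z with hμdef
  set F : ℝ → ℝ :=
    fun s => μ * (∑ i, z i * Real.exp (s * d i)) - ∑ j, infP P z j * (1 + s * t j) with hF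
  have hF0 : F 0 = 0 := by
    simp only [hF, zero_mul, Real.exp_zero, mul_one, add_zero, hz1]
    simp [hμdef, Dfun]
  have hFnonneg : ∀ s ∈ Set.Ioc (0:ℝ) s₀, 0 ≤ F s := by
    intro s hs
    have hzpos : ∀ i, 0 < z i * Real.exp (s * d i) :=
      fun i => mul_pos (hz i) (Real.exp_pos _)
    have h1 : ∑ j, infP P z j * (1 + s * t j) ≤ Dfun P (fun i => z i * Real.exp (s * d i)) := by
      apply Finset.sum_le_sum
      intro j _
      apply le_infP
      intro i
      exact hs₁ (i, j) s ⟨hs.1, hs.2.trans (Finset.inf'_le _ (mem_univ _))⟩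
    have h2 := hDle (fun i => z i * Real.exp (s * d i)) hzpos
    simp only [hF]
    linarith
  have h1 : HasDerivAt (fun s => μ * ∑ i, z i * Real.exp (s * d i))
      (μ * ∑ i, z i * (Real.exp ((0:ℝ) * d i) * (1 * d i))) 0 :=
    HasDerivAt.const_mul μ
      (HasDerivAt.fun_sum fun i _ => (((hasDerivAt_id (0:ℝ)).mul_const (d i)).exp).const_mul (z i))
  have h2 : HasDerivAt (fun s => ∑ j, infP P z j * (1 + s * t j))
      (∑ j, infP P z j * (1 * t j)) 0 :=
    HasDerivAt.fun_sum fun j _ => (((hasDerivAt_id (0:ℝ)).mul_const (t j)).const_add 1).const_mul _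
  have hder : HasDerivAt F
      (μ * ∑ i, z i * (Real.exp ((0:ℝ) * d i) * (1 * d i)) - ∑ j, infP P z j * (1 * t j)) 0 :=
    h1.sub h2
  have hkey := deriv_nonneg_right F _ s₀ hs₀pos hder hF0 hFnonneg
  have hsimp : μ * ∑ i, z i * (Real.exp ((0:ℝ) * d i) * (1 * d i)) -
      ∑ j, infP P z j * (1 * t j) = μ * (∑ i, z i * d i) - ∑ j, infP P z j * t j := by
    simp [zero_mul, Real.exp_zero]
  rw [hsimp] at hkey
  linarith

end support
section sinkhorn
variable {m n : ℕ}

private lemma sinkhorn [Nonempty (Fin m)] [Nonempty (Fin n)]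
    (P : Fin m → Fin n → ℝ) (hP : ∀ i j, 0 < P i j)
    (β : ℝ) (hβ : 0 < β) (ρ : Fin n → ℝ) (hρ : ∀ j, 0 < ρ j)
    (θ : Fin m → ℝ) (hθ : ∀ i, 0 < θ i) (hsum : ∑ i, θ i = ∑ j, ρ j) :
    ∃ c : Fin m → ℝ,
      ∀ i, ∑ j, ρ j * epAlloc P (-β) (fun i' => Real.exp (β * c i')) i j = θ i := by
  have hm1 : (1:ℝ) ≤ m := by exact_mod_cast Fin.pos_iff_nonempty.2 ‹_›
  set S : (Fin m → ℝ) → Fin n → ℝ :=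
    fun c j => ∑ i, P i j ^ (-β) * Real.exp (β * c i) with hSdef
  have hterm : ∀ (c : Fin m → ℝ) i j, 0 < P i j ^ (-β) * Real.exp (β * c i) :=
    fun c i j => mul_pos (Real.rpow_pos_of_pos (hP i j) _) (Real.exp_pos _)
  have hSpos : ∀ c j, 0 < S c j :=
    fun c j => Finset.sum_pos (fun i _ => hterm c i j) univ_nonempty
  set f : (Fin m → ℝ) → ℝ :=
    fun c => β⁻¹ * ∑ j, ρ j * Real.log (S c j) - ∑ i, θ i * c i with hfdef
  have hcont : Continuous f := by
    apply Continuous.sub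
    · refine continuous_const.mul ?_
      apply continuous_finset_sum
      intro j _
      refine continuous_const.mul ?_
      apply Continuous.log
      · apply continuous_finset_sum
        intro i _
        exact continuous_const.mul ((continuous_const.mul (continuous_apply i)).rexp)
      · exact fun c => (hSpos c j).ne'
    · apply continuous_finset_sum
      intro i _
      exact continuous_const.mul (continuous_apply i)
  have hlb : ∀ (c : Fin m → ℝ) j i, β * (c i - Real.log (P i j)) ≤ Real.log (S c j) := by
    intro c j i
    have h1 : P i j ^ (-β) * Real.exp (β * c i) ≤ S c j :=
      Finset.single_le_sum (fun k _ => (hterm c k j).le) (mem_univ i)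
    have h2 := Real.log_le_log (hterm c i j) h1
    rw [Real.log_mul (Real.rpow_pos_of_pos (hP i j) _).ne' (Real.exp_pos _).ne',
      Real.log_rpow (hP i j), Real.log_exp] at h2
    nlinarith [h2]
  set Mx : (Fin m → ℝ) → ℝ := fun c => Finset.univ.sup' Finset.univ_nonempty c with hMxdef
  have hMx : ∀ (c : Fin m → ℝ) i, c i ≤ Mx c := fun c i => Finset.le_sup' c (mem_univ i)
  set Lmax : ℝ :=
    Finset.univ.sup' Finset.univ_nonempty (fun p : Fin m × Fin n => Real.log (P p.1 p.2))
    with hLdef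
  have hL : ∀ i j, Real.log (P i j) ≤ Lmax :=
    fun i j => Finset.le_sup' (fun p : Fin m × Fin n => Real.log (P p.1 p.2)) (mem_univ (i, j))
  set θmin : ℝ := Finset.univ.inf' Finset.univ_nonempty θ with hθmdef
  have hθminpos : 0 < θmin := by
    rw [hθmdef, Finset.lt_inf'_iff]; exact fun i _ => hθ i
  have hθle : ∀ i, θmin ≤ θ i := fun i => Finset.inf'_le θ (mem_univ i)
  set Cst : ℝ := (∑ j, ρ j) * Lmax with hCdef
  have hρsum : 0 < ∑ j, ρ j := Finset.sum_pos (fun j _ => hρ j) univ_nonempty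
  -- coercivity on the zero-sum hyperplane
  have hcoer : ∀ c : Fin m → ℝ, (∑ i, c i = 0) → θmin * ‖c‖ - Cst ≤ f c := by
    intro c hc0
    have hMx0 : 0 ≤ Mx c := by
      have h1 : ∑ i, c i ≤ ∑ _i : Fin m, Mx c :=
        Finset.sum_le_sum fun i _ => hMx c i
      rw [hc0, Finset.sum_const, card_univ, Fintype.card_fin, nsmul_eq_mul] at h1
      nlinarith [h1, hm1]
    have hnorm : ‖c‖ ≤ (m:ℝ) * Mx c := by
      rw [pi_norm_le_iff_of_nonneg (by positivity)]
      intro i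
      rw [Real.norm_eq_abs, abs_le]
      constructor
      · have herase : c i + ∑ k ∈ univ.erase i, c k = 0 := by
          rw [Finset.add_sum_erase _ _ (mem_univ i), hc0]
        have hbd : ∑ k ∈ univ.erase i, c k ≤ ((univ.erase i).card : ℝ) * Mx c := by
          have := Finset.sum_le_card_nsmul (univ.erase i) c (Mx c)
            (fun k _ => hMx c k)
          rwa [nsmul_eq_mul] at this
        have hcard : ((univ.erase i).card : ℝ) ≤ (m:ℝ) := by
          have : (univ.erase i).card ≤ (univ : Finset (Fin m)).card := Finset.card_erase_le.trans le_rfl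
          rw [card_univ, Fintype.card_fin] at this
          exact_mod_cast this
        nlinarith [hbd, hcard, hMx0]
      · calc c i ≤ Mx c := hMx c i
        _ ≤ (m:ℝ) * Mx c := le_mul_of_one_le_left hMx0 hm1
    have hlog : ∀ j, β * (Mx c - Lmax) ≤ Real.log (S c j) := by
      intro j
      obtain ⟨i, _, hi⟩ := Finset.exists_mem_eq_sup' (Finset.univ_nonempty (α := Fin m)) c
      calc β * (Mx c - Lmax) ≤ β * (c i - Real.log (P i j)) := by
            have h1 : Mx c = c i := hi
            have h2 := hL i j
            nlinarith [hβ]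
      _ ≤ Real.log (S c j) := hlb c j i
    have hmain : (∑ j, ρ j) * (Mx c - Lmax) ≤ β⁻¹ * ∑ j, ρ j * Real.log (S c j) := by
      have h1 : (∑ j, ρ j) * (β * (Mx c - Lmax)) ≤ ∑ j, ρ j * Real.log (S c j) := by
        rw [Finset.sum_mul]
        exact Finset.sum_le_sum fun j _ => mul_le_mul_of_nonneg_left (hlog j) (hρ j).le
      have hβ' : (0:ℝ) < β⁻¹ := by positivity
      calc (∑ j, ρ j) * (Mx c - Lmax)
          = β⁻¹ * ((∑ j, ρ j) * (β * (Mx c - Lmax))) := by field_simp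
      _ ≤ β⁻¹ * ∑ j, ρ j * Real.log (S c j) := mul_le_mul_of_nonneg_left h1 hβ'.le
    have hsub : ∑ i, (Mx c - c i) = (m:ℝ) * Mx c := by
      rw [Finset.sum_sub_distrib, hc0, Finset.sum_const, card_univ, Fintype.card_fin,
        nsmul_eq_mul, sub_zero]
    have hlin : θmin * ((m:ℝ) * Mx c) ≤ (∑ j, ρ j) * Mx c - ∑ i, θ i * c i := by
      have h1 : ∑ i, θmin * (Mx c - c i) ≤ ∑ i, θ i * (Mx c - c i) :=
        Finset.sum_le_sum fun i _ =>
          mul_le_mul_of_nonneg_right (hθle i) (by linarith [hMx c i])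
      have h2 : ∑ i, θ i * (Mx c - c i) = (∑ i, θ i) * Mx c - ∑ i, θ i * c i := by
        simp only [mul_sub]
        rw [Finset.sum_sub_distrib, ← Finset.sum_mul]
      have h3 : ∑ i, θmin * (Mx c - c i) = θmin * ((m:ℝ) * Mx c) := by
        rw [← Finset.mul_sum, hsub]
      rw [h3, h2, hsum] at h1
      linarith
    have hnormθ : θmin * ‖c‖ ≤ θmin * ((m:ℝ) * Mx c) :=
      mul_le_mul_of_nonneg_left hnorm hθminpos.le
    simp only [hfdef, hCdef]
    have := hmain
    nlinarith [hmain, hlin, hnormθ]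
  -- invariance under adding constants
  have hSshift : ∀ (c : Fin m → ℝ) (t : ℝ) (j : Fin n),
      S (fun i => c i + t) j = Real.exp (β * t) * S c j := by
    intro c t j
    simp only [hSdef]
    rw [Finset.mul_sum]
    apply Finset.sum_congr rfl
    intro i _
    rw [mul_add, Real.exp_add]
    ring
  have hinv : ∀ (c : Fin m → ℝ) (t : ℝ), f (fun i => c i + t) = f c := by
    intro c t
    simp only [hfdef]
    have h1 : ∀ j, Real.log (S (fun i => c i + t) j) = β * t + Real.log (S c j) := by
      intro j
      rw [hSshift, Real.log_mul (Real.exp_pos _).ne' (hSpos c j).ne', Real.log_exp]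
    have h2 : ∑ j, ρ j * Real.log (S (fun i => c i + t) j)
        = (β * t) * ∑ j, ρ j + ∑ j, ρ j * Real.log (S c j) := by
      rw [Finset.mul_sum, ← Finset.sum_add_distrib]
      apply Finset.sum_congr rfl
      intro j _
      rw [h1 j]
      ring
    have h3 : ∑ i, θ i * (c i + t) = ∑ i, θ i * c i + (∑ i, θ i) * t := by
      rw [Finset.sum_mul, ← Finset.sum_add_distrib]
      apply Finset.sum_congr rfl
      intro i _
      ring
    rw [h2, h3, hsum]
    have hβ0 : β ≠ 0 := hβ.ne'
    field_simp
    ring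
  -- existence of a minimizer on the zero-sum hyperplane
  have hf0C : 0 ≤ f 0 + Cst := by
    have := hcoer 0 (by simp)
    simp only [norm_zero, mul_zero] at this
    linarith
  set R : ℝ := (f 0 + Cst + 1) / θmin with hRdef
  have hRpos : 0 < R := by
    apply div_pos (by linarith) hθminpos
  set K : Set (Fin m → ℝ) := {c | ∑ i, c i = 0} ∩ Metric.closedBall 0 R with hKdef
  have hKcompact : IsCompact K :=
    (isCompact_closedBall (0 : Fin m → ℝ) R).inter_left
      (isClosed_eq (continuous_finset_sum _ fun i _ => continuous_apply i) continuous_const)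
  have hK0 : (0 : Fin m → ℝ) ∈ K := by
    constructor
    · simp
    · rw [Metric.mem_closedBall, dist_zero_left, norm_zero]
      exact hRpos.le
  obtain ⟨c₀, hc₀K, hc₀min⟩ := hKcompact.exists_isMinOn ⟨0, hK0⟩ hcont.continuousOn
  -- c₀ is a global minimizer
  have hglob : ∀ c : Fin m → ℝ, f c₀ ≤ f c := by
    intro c
    set t : ℝ := -(∑ i, c i) / m with htdef
    set c' : Fin m → ℝ := fun i => c i + t with hc'def
    have hm0 : (m:ℝ) ≠ 0 := by linarith
    have hc'0 : ∑ i, c' i = 0 := by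
      simp only [hc'def]
      rw [Finset.sum_add_distrib, Finset.sum_const, card_univ, Fintype.card_fin,
        nsmul_eq_mul, htdef]
      field_simp
      ring
    have hfc' : f c' = f c := hinv c t
    by_cases hball : ‖c'‖ ≤ R
    · have hmem : c' ∈ K := ⟨hc'0, by rwa [Metric.mem_closedBall, dist_zero_right]⟩
      calc f c₀ ≤ f c' := hc₀min hmem
      _ = f c := hfc'
    · push_neg at hball
      have h1 : θmin * ‖c'‖ - Cst ≤ f c' := hcoer c' hc'0
      have h2 : θmin * R < θmin * ‖c'‖ := mul_lt_mul_of_pos_left hball hθminpos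
      have h3 : θmin * R = f 0 + Cst + 1 := by
        rw [hRdef]
        field_simp
      have h4 : f c₀ ≤ f 0 := hc₀min hK0
      rw [hfc'] at h1
      linarith
  -- stationarity at c₀
  refine ⟨c₀, fun i₀ => ?_⟩
  set A : Fin n → ℝ := fun j => ∑ i ∈ univ.erase i₀, P i j ^ (-β) * Real.exp (β * c₀ i)
    with hAdef
  set B : Fin n → ℝ := fun j => P i₀ j ^ (-β) * Real.exp (β * c₀ i₀) with hBdef
  have hBpos : ∀ j, 0 < B j := fun j => hterm c₀ i₀ j
  have hAnn : ∀ j, 0 ≤ A j :=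
    fun j => Finset.sum_nonneg fun i _ => (hterm c₀ i j).le
  have hsplit : ∀ j, S c₀ j = B j + A j := fun j =>
    (Finset.add_sum_erase univ (fun i => P i j ^ (-β) * Real.exp (β * c₀ i))
      (mem_univ i₀)).symm
  set g : ℝ → ℝ := fun u =>
    β⁻¹ * ∑ j, ρ j * Real.log (A j + B j * Real.exp (β * u))
      - (∑ i, θ i * c₀ i + θ i₀ * u) with hgdef
  have hABu : ∀ (u : ℝ) (j : Fin n), 0 < A j + B j * Real.exp (β * u) :=
    fun u j => add_pos_of_nonneg_of_pos (hAnn j) (mul_pos (hBpos j) (Real.exp_pos _))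
  have hg_eq : ∀ u, g u = f (fun i => c₀ i + if i = i₀ then u else 0) := by
    intro u
    simp only [hgdef, hfdef]
    have hSu : ∀ j, S (fun i => c₀ i + if i = i₀ then u else 0) j
        = A j + B j * Real.exp (β * u) := by
      intro j
      have h1 : P i₀ j ^ (-β) * Real.exp (β * (c₀ i₀ + if i₀ = i₀ then u else 0))
          = B j * Real.exp (β * u) := by
        rw [if_pos rfl, hBdef, mul_add, Real.exp_add]
        ring
      have h2 : ∑ i ∈ univ.erase i₀, P i j ^ (-β) *
          Real.exp (β * (c₀ i + if i = i₀ then u else 0)) = A j := by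
        rw [hAdef]
        apply Finset.sum_congr rfl
        intro i hi
        rw [if_neg (Finset.ne_of_mem_erase hi), add_zero]
      have hsum' : S (fun i => c₀ i + if i = i₀ then u else 0) j
          = P i₀ j ^ (-β) * Real.exp (β * (c₀ i₀ + if i₀ = i₀ then u else 0))
            + ∑ i ∈ univ.erase i₀, P i j ^ (-β) *
              Real.exp (β * (c₀ i + if i = i₀ then u else 0)) :=
        (Finset.add_sum_erase _ _ (mem_univ i₀)).symm
      rw [hsum', h1, h2]
      ring
    have hlin2 : ∑ i, θ i * (c₀ i + if i = i₀ then u else 0)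
        = ∑ i, θ i * c₀ i + θ i₀ * u := by
      have : ∀ i, θ i * (c₀ i + if i = i₀ then u else 0)
          = θ i * c₀ i + (if i = i₀ then θ i * u else 0) := by
        intro i
        by_cases h : i = i₀
        · rw [if_pos h, if_pos h, mul_add]
        · rw [if_neg h, if_neg h, add_zero, add_zero]
      rw [Finset.sum_congr rfl fun i _ => this i, Finset.sum_add_distrib,
        Finset.sum_ite_eq' univ i₀ (fun i => θ i * u), if_pos (mem_univ i₀)]
    rw [hlin2]
    congr 2
    apply Finset.sum_congr rfl
    intro j _
    rw [hSu j]
  have hglocal : IsLocalMin g 0 := by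
    apply Filter.Eventually.of_forall
    intro u
    have h0 : g 0 = f c₀ := by
      rw [hg_eq 0]
      congr 1
      funext i
      simp
    rw [h0, hg_eq u]
    exact hglob _
  have hgder : HasDerivAt g
      (β⁻¹ * ∑ j, ρ j * (B j * (Real.exp (β * (0:ℝ)) * (β * 1)) /
        (A j + B j * Real.exp (β * (0:ℝ)))) - θ i₀ * 1) 0 := by
    apply HasDerivAt.sub
    · apply HasDerivAt.const_mul
      apply HasDerivAt.fun_sum
      intro j _
      apply HasDerivAt.const_mul
      exact ((((((hasDerivAt_id (0:ℝ)).const_mul β).exp).const_mul (B j)).const_add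
        (A j)).log (hABu 0 j).ne')
    · exact ((hasDerivAt_id (0:ℝ)).const_mul (θ i₀)).const_add _
  have hzero := hglocal.hasDerivAt_eq_zero hgder
  -- simplify the derivative to the desired identity
  have hx : ∀ j, epAlloc P (-β) (fun i' => Real.exp (β * c₀ i')) i₀ j
      = B j / (A j + B j) := by
    intro j
    have hden : (∑ i', P i' j ^ (-β) * Real.exp (β * c₀ i')) = A j + B j := by
      rw [show (∑ i', P i' j ^ (-β) * Real.exp (β * c₀ i')) = S c₀ j from rfl, hsplit j,
        add_comm]
    simp only [epAlloc]
    rw [hden]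
  have hsimp2 : β⁻¹ * ∑ j, ρ j * (B j * (Real.exp (β * (0:ℝ)) * (β * 1)) /
      (A j + B j * Real.exp (β * (0:ℝ))))
      = ∑ j, ρ j * (B j / (A j + B j)) := by
    rw [Finset.mul_sum]
    apply Finset.sum_congr rfl
    intro j _
    rw [mul_zero, Real.exp_zero]
    have hAB : A j + B j ≠ 0 := (add_pos_of_nonneg_of_pos (hAnn j) (hBpos j)).ne'
    have hβ0 : β ≠ 0 := hβ.ne'
    rw [mul_one, mul_one, one_mul]
    field_simp
  rw [hsimp2] at hzero
  have hfinal : ∑ j, ρ j * epAlloc P (-β) (fun i' => Real.exp (β * c₀ i')) i₀ j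
      = ∑ j, ρ j * (B j / (A j + B j)) := by
    apply Finset.sum_congr rfl
    intro j _
    rw [hx j]
  rw [hfinal]
  linarith

end sinkhorn
section entropy

private lemma entropy_le {m : ℕ} [Nonempty (Fin m)] (x : Fin m → ℝ)
    (hx : ∀ i, 0 < x i) (h1 : ∑ i, x i = 1) :
    -∑ i, x i * Real.log (x i) ≤ Real.log m := by
  have hm0 : (0:ℝ) < m := by exact_mod_cast Fin.pos_iff_nonempty.2 ‹_›
  have key : ∀ i, x i * (-Real.log m - Real.log (x i)) ≤ (m:ℝ)⁻¹ - x i := by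
    intro i
    have h2 : Real.log (((m:ℝ) * x i)⁻¹) ≤ ((m:ℝ) * x i)⁻¹ - 1 :=
      Real.log_le_sub_one_of_pos (inv_pos.2 (mul_pos hm0 (hx i)))
    have h3 : Real.log (((m:ℝ) * x i)⁻¹) = -(Real.log m + Real.log (x i)) := by
      rw [Real.log_inv, Real.log_mul hm0.ne' (hx i).ne']
    rw [h3] at h2
    have h4 := mul_le_mul_of_nonneg_left h2 (hx i).le
    have h5 : x i * ((m:ℝ) * x i)⁻¹ = (m:ℝ)⁻¹ := by
      rw [mul_inv, ← mul_assoc, mul_comm (x i) ((m:ℝ)⁻¹), mul_assoc,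
        mul_inv_cancel₀ (hx i).ne', mul_one]
    calc x i * (-Real.log m - Real.log (x i))
        = x i * -(Real.log m + Real.log (x i)) := by ring
    _ ≤ x i * (((m:ℝ) * x i)⁻¹ - 1) := h4
    _ = x i * ((m:ℝ) * x i)⁻¹ - x i := by ring
    _ = (m:ℝ)⁻¹ - x i := by rw [h5]
  have hsumkey : ∑ i, x i * (-Real.log m - Real.log (x i)) ≤ ∑ i, ((m:ℝ)⁻¹ - x i) :=
    Finset.sum_le_sum fun i _ => key i
  have hrhs : ∑ i, ((m:ℝ)⁻¹ - x i) = 0 := by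
    rw [Finset.sum_sub_distrib, h1, Finset.sum_const, card_univ, Fintype.card_fin,
      nsmul_eq_mul]
    field_simp
    ring
  have hlhs : ∑ i, x i * (-Real.log m - Real.log (x i))
      = -Real.log m - ∑ i, x i * Real.log (x i) := by
    have : ∀ i, x i * (-Real.log m - Real.log (x i))
        = -Real.log m * x i - x i * Real.log (x i) := fun i => by ring
    rw [Finset.sum_congr rfl fun i _ => this i, Finset.sum_sub_distrib, ← Finset.mul_sum, h1,
      mul_one]
  rw [hlhs, hrhs] at hsumkey
  linarith

end entropy
theorem stmt10 {m n : ℕ} (hm : 0 < m) (P : Fin m → Fin n → ℝ)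
    (hP : ∀ i j, 0 < P i j) (ε : ℝ) (hε : 0 < ε) :
    ∃ (α : ℝ) (w : Fin m → ℝ), (∀ i, 0 < w i) ∧
      ∀ i, epLoad P α w i ≤ (1 + ε) * MKS P := by
  haveI hmne : Nonempty (Fin m) := Fin.pos_iff_nonempty.1 hm
  rcases Nat.eq_zero_or_pos n with hn | hn
  · -- trivial case: no items
    subst hn
    refine ⟨0, fun _ => 1, fun _ => one_pos, ?_⟩
    intro i
    have hload : epLoad P 0 (fun _ => 1) i = 0 := by
      simp [epLoad]
    have hMKS : MKS P = 0 := by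
      have hset : { t | ∃ X, Feasible X ∧ t = ⨆ i, loadX P X i } = {0} := by
        ext t
        simp only [Set.mem_setOf_eq, Set.mem_singleton_iff]
        constructor
        · rintro ⟨X, _, rfl⟩
          have hl : ∀ i, loadX P X i = 0 := fun i => by simp [loadX]
          have hfun : loadX P X = fun _ => (0:ℝ) := funext hl
          rw [hfun]
          exact ciSup_const
        · rintro rfl
          refine ⟨fun _ _ => 0, ⟨fun i j => j.elim0, fun j => j.elim0⟩, ?_⟩
          have hl : ∀ i, loadX P (fun _ _ => (0:ℝ)) i = 0 := fun i => by simp [loadX]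
          have hfun : loadX P (fun _ _ => (0:ℝ)) = fun _ => (0:ℝ) := funext hl
          rw [hfun]
          exact ciSup_const.symm
      rw [MKS, hset, csInf_singleton]
    rw [hload, hMKS, mul_zero]
  · -- main case
    haveI hnne : Nonempty (Fin n) := Fin.pos_iff_nonempty.1 hn
    obtain ⟨z, hz, hz1, hmax⟩ := exists_dual P hP
    set μ := Dfun P z with hμdef
    have hμpos : 0 < μ :=
      Finset.sum_pos (fun j _ => infP_pos hP hz j) univ_nonempty
    set y : Fin n → ℝ := fun j => infP P z j with hydef
    have hypos : ∀ j, 0 < y j := fun j => infP_pos hP hz j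
    have hyle : ∀ i j, y j ≤ z i * P i j := fun i j => infP_le j i
    have hysum : ∑ j, y j = μ := rfl
    set s : Fin m → Fin n → ℝ :=
      fun i j => Real.log (z i) + Real.log (P i j) - Real.log (y j) with hsdef
    have hs0 : ∀ i j, 0 ≤ s i j := by
      intro i j
      have h1 := Real.log_le_log (hypos j) (hyle i j)
      rw [Real.log_mul (hz i).ne' (hP i j).ne'] at h1
      simp only [hsdef]
      linarith
    have hexp_s : ∀ i j, y j * Real.exp (s i j) = z i * P i j := by
      intro i j
      simp only [hsdef]
      rw [Real.exp_sub, Real.exp_add, Real.exp_log (hz i), Real.exp_log (hP i j),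
        Real.exp_log (hypos j), mul_comm]
      exact div_mul_cancel₀ _ (hypos j).ne'
    set K : ℝ := Real.exp ((univ : Finset (Fin m × Fin n)).sup' univ_nonempty
      (fun p => s p.1 p.2)) with hKdef
    have hKbd : ∀ i j, Real.exp (s i j) ≤ K := fun i j =>
      Real.exp_le_exp.2 (Finset.le_sup' (fun p : Fin m × Fin n => s p.1 p.2) (mem_univ (i, j)))
    have hKpos : 0 < K := Real.exp_pos _
    have hexp_bd : ∀ i j, Real.exp (s i j) ≤ 1 + K * s i j := by
      intro i j
      have h1 : 1 - s i j ≤ Real.exp (-(s i j)) := by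
        linarith [Real.add_one_le_exp (-(s i j))]
      have h2 : Real.exp (s i j) * (1 - s i j) ≤ 1 := by
        calc Real.exp (s i j) * (1 - s i j) ≤ Real.exp (s i j) * Real.exp (-(s i j)) :=
              mul_le_mul_of_nonneg_left h1 (Real.exp_pos _).le
        _ = 1 := by rw [← Real.exp_add]; simp
      nlinarith [hKbd i j, hs0 i j, (Real.exp_pos (s i j)).le]
    set zmin : ℝ := univ.inf' univ_nonempty z with hzmindef
    have hzminpos : 0 < zmin := by
      rw [hzmindef, Finset.lt_inf'_iff]; exact fun i _ => hz i
    have hzminle : ∀ i, zmin ≤ z i := fun i => Finset.inf'_le z (mem_univ i)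
    have hlogm : 0 ≤ Real.log m := Real.log_natCast_nonneg m
    set β : ℝ := K * (Real.log m + 1) / (zmin * ε) with hβdef
    have hβpos : 0 < β :=
      div_pos (mul_pos hKpos (by linarith)) (mul_pos hzminpos hε)
    have hβ0 : β ≠ 0 := hβpos.ne'
    obtain ⟨c, hc⟩ := sinkhorn P hP β hβpos y hypos (fun i => μ * z i)
      (fun i => mul_pos hμpos (hz i))
      (by rw [← Finset.mul_sum, hz1, mul_one]; exact hysum.symm)
    set w : Fin m → ℝ := fun i' => Real.exp (β * c i') with hwdef
    have hw : ∀ i, 0 < w i := fun i => Real.exp_pos _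
    set x : Fin m → Fin n → ℝ := fun i j => epAlloc P (-β) w i j with hxdef
    have hcount : ∀ i, ∑ j, y j * x i j = μ * z i := hc
    set Sd : Fin n → ℝ := fun j => ∑ i', P i' j ^ (-β) * w i' with hSddef
    have hterm : ∀ i j, 0 < P i j ^ (-β) * w i :=
      fun i j => mul_pos (Real.rpow_pos_of_pos (hP i j) _) (hw i)
    have hSdpos : ∀ j, 0 < Sd j :=
      fun j => Finset.sum_pos (fun i _ => hterm i j) univ_nonempty
    have hxval : ∀ i j, x i j = P i j ^ (-β) * w i / Sd j := fun i j => rfl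
    have hxpos : ∀ i j, 0 < x i j := by
      intro i j
      rw [hxval]
      exact div_pos (hterm i j) (hSdpos j)
    have hxsum : ∀ j, ∑ i, x i j = 1 := by
      intro j
      have : ∑ i, x i j = (∑ i, P i j ^ (-β) * w i) / Sd j := by
        rw [Finset.sum_div]
        exact Finset.sum_congr rfl fun i _ => hxval i j
      rw [this]
      exact div_self (hSdpos j).ne'
    have hlogx : ∀ i j, Real.log (x i j)
        = -β * Real.log (P i j) + β * c i - Real.log (Sd j) := by
      intro i j
      rw [hxval, Real.log_div (hterm i j).ne' (hSdpos j).ne',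
        Real.log_mul (Real.rpow_pos_of_pos (hP i j) _).ne' (hw i).ne',
        Real.log_rpow (hP i j), hwdef, Real.log_exp]
    have hSd_lb : ∀ j i, β * (c i - Real.log (P i j)) ≤ Real.log (Sd j) := by
      intro j i
      have h1 : P i j ^ (-β) * w i ≤ Sd j :=
        Finset.single_le_sum (fun k _ => (hterm k j).le) (mem_univ i)
      have h2 := Real.log_le_log (hterm i j) h1
      rw [Real.log_mul (Real.rpow_pos_of_pos (hP i j) _).ne' (hw i).ne',
        Real.log_rpow (hP i j), hwdef, Real.log_exp] at h2
      nlinarith [h2]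
    set d : Fin m → ℝ := fun i => c i + Real.log (z i) with hddef
    set t : Fin n → ℝ := fun j => -(β⁻¹ * Real.log (Sd j)) - Real.log (y j) with htdef
    -- support inequality applied with direction -d
    have hsupp : ∑ j, y j * t j ≤ μ * ∑ i, z i * (-(d i)) := by
      apply support_ineq P hP z hz hz1 hmax (fun i => -(d i)) t
      intro j i htight
      have hlogP : Real.log (P i j) = Real.log (y j) - Real.log (z i) := by
        have h1 : Real.log (z i * P i j) = Real.log (y j) := by rw [htight]
        rw [Real.log_mul (hz i).ne' (hP i j).ne'] at h1
        linarith
      have h2 := hSd_lb j i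
      rw [hlogP] at h2
      simp only [htdef, hddef]
      have h3 : β⁻¹ * (β * (c i - (Real.log (y j) - Real.log (z i))))
          ≤ β⁻¹ * Real.log (Sd j) :=
        mul_le_mul_of_nonneg_left h2 (by positivity)
      rw [← mul_assoc, inv_mul_cancel₀ hβ0, one_mul] at h3
      linarith
    -- pointwise identity
    have hptwise : ∀ i j, s i j = d i - β⁻¹ * Real.log (x i j) + t j := by
      intro i j
      have h := hlogx i j
      have h2 : β⁻¹ * Real.log (x i j)
          = -Real.log (P i j) + c i - β⁻¹ * Real.log (Sd j) := by
        rw [h]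
        field_simp
      simp only [hsdef, hddef, htdef]
      linarith
    -- per-item bound using entropy
    have hT1 : ∀ j, ∑ i, x i j * s i j ≤ ∑ i, x i j * d i + β⁻¹ * Real.log m + t j := by
      intro j
      have hid : ∑ i, x i j * s i j
          = ∑ i, x i j * d i + β⁻¹ * (-∑ i, x i j * Real.log (x i j)) + t j := by
        have hrw : ∀ i, x i j * s i j
            = x i j * d i + β⁻¹ * (-(x i j * Real.log (x i j))) + t j * x i j := by
          intro i
          rw [hptwise i j]
          ring
        rw [Finset.sum_congr rfl fun i _ => hrw i, Finset.sum_add_distrib,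
          Finset.sum_add_distrib, ← Finset.mul_sum, ← Finset.mul_sum, hxsum j, mul_one,
          ← Finset.sum_neg_distrib]
      have hent : -∑ i, x i j * Real.log (x i j) ≤ Real.log m :=
        entropy_le (fun i => x i j) (fun i => hxpos i j) (hxsum j)
      have := mul_le_mul_of_nonneg_left hent (by positivity : (0:ℝ) ≤ β⁻¹)
      rw [hid]
      linarith
    -- total slack bound
    have hswap : ∑ j, y j * ∑ i, x i j * d i = ∑ i, μ * z i * d i := by
      have h1 : ∀ j, y j * ∑ i, x i j * d i = ∑ i, y j * x i j * d i := by
        intro j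
        rw [Finset.mul_sum]
        exact Finset.sum_congr rfl fun i _ => by ring
      rw [Finset.sum_congr rfl fun j _ => h1 j, Finset.sum_comm]
      exact Finset.sum_congr rfl fun i _ => by rw [← Finset.sum_mul, hcount i]
    have hTot : ∑ j, y j * ∑ i, x i j * s i j ≤ μ * (β⁻¹ * Real.log m) := by
      have h1 : ∑ j, y j * ∑ i, x i j * s i j
          ≤ ∑ j, y j * (∑ i, x i j * d i + β⁻¹ * Real.log m + t j) :=
        Finset.sum_le_sum fun j _ => mul_le_mul_of_nonneg_left (hT1 j) (hypos j).le
      have h2 : ∑ j, y j * (∑ i, x i j * d i + β⁻¹ * Real.log m + t j)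
          = ∑ j, y j * ∑ i, x i j * d i + (∑ j, y j) * (β⁻¹ * Real.log m)
            + ∑ j, y j * t j := by
        rw [Finset.sum_mul, ← Finset.sum_add_distrib, ← Finset.sum_add_distrib]
        exact Finset.sum_congr rfl fun j _ => by ring
      have h3 : ∑ i, μ * z i * d i + μ * ∑ i, z i * (-(d i)) = 0 := by
        rw [Finset.mul_sum, ← Finset.sum_add_distrib]
        have hz0 : ∀ i ∈ univ, μ * z i * d i + μ * (z i * -(d i)) = 0 := fun i _ => by ring
        rw [Finset.sum_congr rfl hz0, Finset.sum_const_zero]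
      rw [h2, hswap, hysum] at h1
      linarith [hsupp, h1]
    -- per-agent conclusion
    have hμMKS : μ ≤ MKS P := dual_le_MKS P hP z (fun i => (hz i).le) hz1
    refine ⟨-β, w, hw, ?_⟩
    intro i
    have hload : epLoad P (-β) w i = ∑ j, x i j * P i j := rfl
    have hslack_i : ∑ j, y j * (x i j * s i j) ≤ μ * (β⁻¹ * Real.log m) := by
      refine le_trans ?_ hTot
      apply Finset.sum_le_sum
      intro j _
      apply mul_le_mul_of_nonneg_left _ (hypos j).le
      apply Finset.single_le_sum (f := fun i' => x i' j * s i' j) _ (mem_univ i)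
      exact fun i' _ => mul_nonneg (hxpos i' j).le (hs0 i' j)
    have hmain : z i * epLoad P (-β) w i ≤ μ * z i + K * (μ * (β⁻¹ * Real.log m)) := by
      rw [hload, Finset.mul_sum]
      have h1 : ∀ j, z i * (x i j * P i j) = x i j * (y j * Real.exp (s i j)) := by
        intro j
        rw [hexp_s i j]
        ring
      rw [Finset.sum_congr rfl fun j _ => h1 j]
      have h2 : ∀ j, x i j * (y j * Real.exp (s i j))
          ≤ y j * x i j + K * (y j * (x i j * s i j)) := by
        intro j
        have h3 : x i j * (y j * Real.exp (s i j)) ≤ x i j * (y j * (1 + K * s i j)) := by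
          apply mul_le_mul_of_nonneg_left _ (hxpos i j).le
          exact mul_le_mul_of_nonneg_left (hexp_bd i j) (hypos j).le
        calc x i j * (y j * Real.exp (s i j)) ≤ x i j * (y j * (1 + K * s i j)) := h3
        _ = y j * x i j + K * (y j * (x i j * s i j)) := by ring
      calc ∑ j, x i j * (y j * Real.exp (s i j))
          ≤ ∑ j, (y j * x i j + K * (y j * (x i j * s i j))) :=
            Finset.sum_le_sum fun j _ => h2 j
      _ = ∑ j, y j * x i j + K * ∑ j, y j * (x i j * s i j) := by
          rw [Finset.sum_add_distrib, ← Finset.mul_sum]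
      _ ≤ μ * z i + K * (μ * (β⁻¹ * Real.log m)) := by
          rw [hcount i]
          have := mul_le_mul_of_nonneg_left hslack_i hKpos.le
          linarith
    have hβKey : K * (β⁻¹ * Real.log m) ≤ zmin * ε := by
      have hβval : β * (zmin * ε) = K * (Real.log m + 1) := by
        rw [hβdef]
        field_simp
      have h1 : K * Real.log m ≤ K * (Real.log m + 1) := by nlinarith
      rw [← hβval] at h1
      calc K * (β⁻¹ * Real.log m) = (K * Real.log m) * β⁻¹ := by ring
      _ ≤ (β * (zmin * ε)) * β⁻¹ := mul_le_mul_of_nonneg_right h1 (by positivity)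
      _ = zmin * ε := by
          rw [mul_comm β (zmin * ε), mul_assoc, mul_inv_cancel₀ hβ0, mul_one]
    have hfinal : z i * epLoad P (-β) w i ≤ z i * ((1 + ε) * μ) := by
      have h1 : K * (μ * (β⁻¹ * Real.log m)) ≤ μ * (zmin * ε) := by
        have : K * (μ * (β⁻¹ * Real.log m)) = μ * (K * (β⁻¹ * Real.log m)) := by ring
        rw [this]
        exact mul_le_mul_of_nonneg_left hβKey hμpos.le
      have h2 : μ * (zmin * ε) ≤ μ * (z i * ε) :=
        mul_le_mul_of_nonneg_left
          (mul_le_mul_of_nonneg_right (hzminle i) hε.le) hμpos.le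
      calc z i * epLoad P (-β) w i ≤ μ * z i + K * (μ * (β⁻¹ * Real.log m)) := hmain
      _ ≤ μ * z i + μ * (z i * ε) := by linarith
      _ = z i * ((1 + ε) * μ) := by ring
    have h4 : epLoad P (-β) w i ≤ (1 + ε) * μ :=
      le_of_mul_le_mul_left (by linarith [hfinal]) (hz i)
    calc epLoad P (-β) w i ≤ (1 + ε) * μ := h4
    _ ≤ (1 + ε) * MKS P := mul_le_mul_of_nonneg_left hμMKS (by linarith)
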